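/- Let α ∈ (0,1], r₁ ∈ ℝ a root of multiplicity at least l+1 of the polynomial P(X) = Xⁿ + p_{n-1}X^{n-1} + ⋯ + p₀ (i.e. P and its first l derivatives vanish at r₁). Then y(t) = (t^α/α)^l · exp(r₁ t^α/α) satisfies ⁿT_α y + p_{n-1}·ⁿ⁻¹T_α y + ⋯ + p₀ y = 0 for all t > 0. -/

import Mathlib

noncomputable def condD (α : ℝ) (f : ℝ → ℝ) : ℝ → ℝ := fun t => t ^ (1 - α) * deriv f t

open Polynomial

noncomputable def Lop (r : ℝ) : Module.End ℝ (Polynomial ℝ) :=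
  Polynomial.derivative + algebraMap ℝ (Module.End ℝ (Polynomial ℝ)) r

lemma hasDerivAt_pe (Q : ℝ[X]) (r s : ℝ) :
    HasDerivAt (fun s => Q.eval s * Real.exp (r * s))
      ((Lop r Q).eval s * Real.exp (r * s)) s := by
  have h2 : HasDerivAt (fun s : ℝ => Real.exp (r * s)) (Real.exp (r * s) * r) s := by
    simpa using ((hasDerivAt_id s).const_mul r).exp
  have h : HasDerivAt (fun s => Q.eval s * Real.exp (r * s)) _ s := (Q.hasDerivAt s).mul h2
  convert h using 1
  simp only [Lop, LinearMap.add_apply, Module.algebraMap_end_apply, eval_add, eval_smul,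
    smul_eq_mul]
  ring

lemma key_step (r : ℝ) (Q : ℝ[X]) (α : ℝ) (hα0 : 0 < α) (k : ℕ) :
    ∀ t > 0, (condD α)^[k] (fun x => Q.eval (x ^ α / α) * Real.exp (r * (x ^ α / α))) t
      = ((Lop r ^ k) Q).eval (t ^ α / α) * Real.exp (r * (t ^ α / α)) := by
  induction k with
  | zero => intro t ht; simp
  | succ k ih =>
    intro t ht
    rw [Function.iterate_succ_apply']
    show t ^ (1 - α) * deriv _ t = _
    have hev : deriv ((condD α)^[k] (fun x => Q.eval (x ^ α / α) * Real.exp (r * (x ^ α / α)))) t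
        = deriv (fun x => ((Lop r ^ k) Q).eval (x ^ α / α) * Real.exp (r * (x ^ α / α))) t := by
      apply Filter.EventuallyEq.deriv_eq
      filter_upwards [isOpen_Ioi.mem_nhds ht] with x hx
      exact ih x hx
    rw [hev]
    have hs : HasDerivAt (fun x : ℝ => x ^ α / α) (t ^ (α - 1)) t := by
      have h := (Real.hasDerivAt_rpow_const (x := t) (p := α) (Or.inl ht.ne')).div_const α
      simpa [mul_div_assoc, mul_div_cancel_left₀ _ hα0.ne'] using h
    have hc : HasDerivAt (fun x : ℝ => ((Lop r ^ k) Q).eval (x ^ α / α)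
          * Real.exp (r * (x ^ α / α)))
        ((Lop r ((Lop r ^ k) Q)).eval (t ^ α / α) * Real.exp (r * (t ^ α / α)) * t ^ (α - 1)) t :=
      by have := (hasDerivAt_pe ((Lop r ^ k) Q) r (t ^ α / α)).comp t hs; exact this
    rw [hc.deriv, pow_succ', Module.End.mul_apply]
    have h1 : t ^ (1 - α) * t ^ (α - 1) = 1 := by
      rw [← Real.rpow_add ht]; norm_num
    calc t ^ (1 - α) * ((Lop r ((Lop r ^ k) Q)).eval (t ^ α / α)
            * Real.exp (r * (t ^ α / α)) * t ^ (α - 1))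
        = (t ^ (1 - α) * t ^ (α - 1)) * ((Lop r ((Lop r ^ k) Q)).eval (t ^ α / α)
            * Real.exp (r * (t ^ α / α))) := by ring
      _ = _ := by rw [h1, one_mul]

lemma poly_kill (P : ℝ[X]) (r : ℝ) (l : ℕ)
    (hroot : ∀ j ≤ l, (derivative^[j] P).eval r = 0) :
    (aeval (Lop r) P) (X ^ l : ℝ[X]) = 0 := by
  have hL : Lop r = aeval (derivative : Module.End ℝ ℝ[X]) (X + C r) := by
    simp [Lop, map_add, aeval_X, aeval_C]
  rw [hL, ← aeval_comp, ← taylor_apply]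
  have hco : ∀ j ≤ l, (taylor r P).coeff j = 0 := by
    intro j hj
    rw [taylor_coeff]
    have h1 : (Nat.factorial j) • (hasseDeriv j P).eval r = 0 := by
      have := congrArg (Polynomial.eval r) (congrFun (factorial_smul_hasseDeriv (R := ℝ) j) P)
      simpa using this.trans (hroot j hj)
    have h2 : ((Nat.factorial j : ℝ)) * (hasseDeriv j P).eval r = 0 := by
      simpa [nsmul_eq_mul] using h1
    rcases mul_eq_zero.1 h2 with h | h
    · exact absurd h (by positivity)
    · exact h
  have hdvd : (X : ℝ[X]) ^ (l + 1) ∣ taylor r P := by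
    rw [X_pow_dvd_iff]
    intro d hd
    exact hco d (Nat.lt_succ_iff.mp hd)
  obtain ⟨S, hS⟩ := hdvd
  rw [hS, show (X:Polynomial ℝ)^(l+1) * S = S * X^(l+1) from mul_comm _ _, map_mul, aeval_X_pow, Module.End.mul_apply, Module.End.pow_apply,
    iterate_derivative_eq_zero (by simp [natDegree_X_pow]), map_zero]

open Polynomial in
theorem stmt_13 (α : ℝ) (hα : α ∈ Set.Ioc (0:ℝ) 1) (n : ℕ) (p : Fin n → ℝ)
    (r₁ : ℝ) (l : ℕ)
    (hroot : ∀ j ≤ l,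
      (Polynomial.derivative^[j] (X ^ n + ∑ i : Fin n, C (p i) * X ^ (i : ℕ))).eval r₁ = 0)
    (t : ℝ) (ht : 0 < t) :
    (condD α)^[n] (fun x => (x ^ α / α) ^ l * Real.exp (r₁ * x ^ α / α)) t
      + ∑ i : Fin n, p i *
          (condD α)^[(i : ℕ)] (fun x => (x ^ α / α) ^ l * Real.exp (r₁ * x ^ α / α)) t
      = 0 := by
  obtain ⟨hα0, hα1⟩ := hα
  set P : ℝ[X] := X ^ n + ∑ i : Fin n, C (p i) * X ^ (i : ℕ) with hP
  have hfun : (fun x : ℝ => (x ^ α / α) ^ l * Real.exp (r₁ * x ^ α / α))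
      = fun x => (X ^ l : ℝ[X]).eval (x ^ α / α) * Real.exp (r₁ * (x ^ α / α)) := by
    funext x
    rw [eval_pow, eval_X, mul_div_assoc]
  rw [hfun]
  have hk := key_step r₁ (X ^ l) α hα0
  rw [hk n t ht]
  have hsum : ∀ i : Fin n,
      (condD α)^[(i:ℕ)] (fun x => (X ^ l : ℝ[X]).eval (x ^ α / α)
        * Real.exp (r₁ * (x ^ α / α))) t
      = ((Lop r₁ ^ (i:ℕ)) (X ^ l)).eval (t ^ α / α) * Real.exp (r₁ * (t ^ α / α)) :=
    fun i => hk i t ht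
  simp only [hsum]
  have key : ((aeval (Lop r₁) P) (X ^ l : ℝ[X])).eval (t ^ α / α) = 0 := by
    rw [poly_kill P r₁ l hroot, eval_zero]
  have hexpand : (aeval (Lop r₁) P) (X ^ l : ℝ[X])
      = (Lop r₁ ^ n) (X ^ l) + ∑ i : Fin n, p i • (Lop r₁ ^ (i:ℕ)) (X ^ l) := by
    rw [hP, map_add, map_sum, LinearMap.add_apply, LinearMap.sum_apply, aeval_X_pow]
    congr 1
    refine Finset.sum_congr rfl fun i _ => ?_
    rw [map_mul, aeval_C, aeval_X_pow, Module.End.mul_apply, Module.algebraMap_end_apply]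
  rw [hexpand] at key
  simp only [eval_add, eval_finset_sum, eval_smul, smul_eq_mul] at key
  calc ((Lop r₁ ^ n) (X ^ l)).eval (t ^ α / α) * Real.exp (r₁ * (t ^ α / α))
        + ∑ i : Fin n, p i * (((Lop r₁ ^ (i:ℕ)) (X ^ l)).eval (t ^ α / α)
            * Real.exp (r₁ * (t ^ α / α)))
      = (((Lop r₁ ^ n) (X ^ l)).eval (t ^ α / α)
        + ∑ i : Fin n, p i * ((Lop r₁ ^ (i:ℕ)) (X ^ l)).eval (t ^ α / α))
          * Real.exp (r₁ * (t ^ α / α)) := by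
        rw [add_mul, Finset.sum_mul]
        exact congrArg _ (Finset.sum_congr rfl fun i _ => by ring)
  _ = 0 := by rw [key, zero_mul]
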